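/- Let w ∈ S_n be an involution different from the identity. Then at least one of the following holds: (i) there exists an involution w' ∈ S_n with w' < w in the Bruhat order, inv(w') = inv(w) − 1, and ℓ_θ(w') = ℓ_θ(w) − 1; or (ii) there exist an involution w' ∈ S_n and an element s ∈ S_n with w' < s < w in the Bruhat order, inv(w') = inv(s) − 1 = inv(w) − 2, and ℓ_θ(w') = ℓ_θ(w) − 1. -/

import Mathlib

/-- Number of inversions of a permutation of `Fin n`: pairs `i < j` with `w i > w j`. -/
def invNum {n : ℕ} (w : Equiv.Perm (Fin n)) : ℕ :=
  (Finset.univ.filter fun p : Fin n × Fin n => p.1 < p.2 ∧ w p.2 < w p.1).card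

/-- Number of excedances of a permutation of `Fin n`: indices `i` with `w i > i`. -/
def excNum {n : ℕ} (w : Equiv.Perm (Fin n)) : ℕ :=
  (Finset.univ.filter fun i : Fin n => i < w i).card

/-- The θ-length of an involution: `(inv w + exc w) / 2`. -/
def thetaLength {n : ℕ} (w : Equiv.Perm (Fin n)) : ℕ := (invNum w + excNum w) / 2

/-- The Bruhat order on `S_n`, via the rank-matrix characterization:
`u ≤ v` iff for all `i, j`, `#{a ≤ i : u a ≥ j} ≤ #{a ≤ i : v a ≥ j}`. -/
def bruhatLE {n : ℕ} (u v : Equiv.Perm (Fin n)) : Prop :=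
  ∀ i j : Fin n,
    (Finset.univ.filter fun a : Fin n => a ≤ i ∧ j ≤ u a).card ≤
    (Finset.univ.filter fun a : Fin n => a ≤ i ∧ j ≤ v a).card

/-- Strict Bruhat order. -/
def bruhatLT {n : ℕ} (u v : Equiv.Perm (Fin n)) : Prop := bruhatLE u v ∧ u ≠ v

section Aux
variable {n : ℕ}

lemma swap_lt_swap {i j x y : Fin n} (hij : (i:ℕ)+1 = j) (hxy : x < y)
    (h : ¬(x = i ∧ y = j)) : Equiv.swap i j x < Equiv.swap i j y := by
  rw [Equiv.swap_apply_def, Equiv.swap_apply_def]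
  split_ifs <;>
    simp only [Fin.lt_def, Fin.ext_iff, not_and] at * <;> omega

lemma exists_descent (w : Equiv.Perm (Fin n)) (hne : w ≠ 1) :
    ∃ i j : Fin n, (i:ℕ)+1 = j ∧ w j < w i := by
  by_contra h
  push_neg at h
  have step : ∀ k : ℕ, ∀ a b : Fin n, (a:ℕ) + k + 1 = (b:ℕ) → w a < w b := by
    intro k
    induction k with
    | zero =>
      intro a b hab
      have hle := h a b (by omega)
      have hne' : a ≠ b := by
        intro he; rw [he] at hab; omega
      exact lt_of_le_of_ne hle (w.injective.ne hne')
    | succ k ih =>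
      intro a b hab
      have hm : (a:ℕ) + 1 < n := by
        have := b.isLt; omega
      have h1 : w a < w (⟨(a:ℕ)+1, hm⟩ : Fin n) := by
        have hle := h a ⟨(a:ℕ)+1, hm⟩ rfl
        refine hle.lt_of_ne (w.injective.ne ?_)
        intro he
        have := congrArg Fin.val he
        simp at this
      have h2 : w (⟨(a:ℕ)+1, hm⟩ : Fin n) < w b := by
        apply ih ⟨(a:ℕ)+1, hm⟩ b
        simp only [Fin.val_mk]
        omega
      exact h1.trans h2
  have mono : StrictMono w := by
    intro a b hab
    have : (a:ℕ) < (b:ℕ) := hab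
    exact step ((b:ℕ) - (a:ℕ) - 1) a b (by omega)
  have : (w : Fin n → Fin n) = id := by
    apply (mono.range_inj strictMono_id).mp
    rw [Set.range_id, w.surjective.range_eq]
  apply hne
  ext x
  have := congrFun this x
  simp only [id_eq] at this
  simp [this]

lemma invNum_inv (w : Equiv.Perm (Fin n)) : invNum w⁻¹ = invNum w := by
  unfold invNum
  apply Finset.card_nbij' (fun p => (w⁻¹ p.2, w⁻¹ p.1)) (fun q => (w q.2, w q.1))
  · intro p hp
    simp only [Finset.mem_coe, Finset.mem_val, Finset.mem_filter, Finset.mem_univ, true_and] at hp ⊢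
    exact ⟨hp.2, by simpa using hp.1⟩
  · intro q hq
    simp only [Finset.mem_coe, Finset.mem_val, Finset.mem_filter, Finset.mem_univ, true_and] at hq ⊢
    exact ⟨hq.2, by simpa using hq.1⟩
  · intro p _; simp
  · intro q _; simp

lemma invNum_swap_right (w : Equiv.Perm (Fin n)) {i j : Fin n} (hij : (i:ℕ)+1 = j)
    (hd : w j < w i) : invNum (w * Equiv.swap i j) + 1 = invNum w := by
  set s := Equiv.swap i j with hs
  have hsc : ∀ x, s (s x) = x := fun x => Equiv.swap_apply_self i j x
  have hilt : i < j := by rw [Fin.lt_def]; omega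
  set S := (Finset.univ.filter fun p : Fin n × Fin n => p.1 < p.2 ∧ (w * s) p.2 < (w * s) p.1)
    with hS
  set T := (Finset.univ.filter fun p : Fin n × Fin n => p.1 < p.2 ∧ w p.2 < w p.1) with hT
  have hmemT : (i, j) ∈ T := by
    simp [hT, hilt, hd]
  have hcard : S.card = (T.erase (i, j)).card := by
    apply Finset.card_nbij' (fun p => (s p.1, s p.2)) (fun q => (s q.1, s q.2))
    · intro p hp
      simp only [Finset.mem_coe, Finset.mem_val, hS, Finset.mem_filter, Finset.mem_univ, true_and] at hp
      simp only [Equiv.Perm.mul_apply] at hp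
      obtain ⟨h1, h2⟩ := hp
      have hne : ¬(p.1 = i ∧ p.2 = j) := by
        rintro ⟨e1, e2⟩
        rw [e1, e2] at h2
        rw [Equiv.swap_apply_left, Equiv.swap_apply_right] at h2
        exact absurd (h2.trans hd) (lt_irrefl _)
      have hlt : s p.1 < s p.2 := swap_lt_swap hij h1 hne
      simp only [Finset.mem_coe, Finset.mem_val, Finset.mem_erase, hT, Finset.mem_filter, Finset.mem_univ, true_and]
      refine ⟨?_, hlt, h2⟩
      intro he
      have e1 : s p.1 = i := congrArg Prod.fst he
      have e2 : s p.2 = j := congrArg Prod.snd he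
      have f1 : p.1 = s i := by rw [← e1, hsc]
      have f2 : p.2 = s j := by rw [← e2, hsc]
      rw [show s i = j from Equiv.swap_apply_left i j] at f1
      rw [show s j = i from Equiv.swap_apply_right i j] at f2
      rw [f1, f2] at h1
      exact absurd (h1.trans hilt) (lt_irrefl _)
    · intro q hq
      simp only [Finset.mem_coe, Finset.mem_val, Finset.mem_erase, hT, Finset.mem_filter, Finset.mem_univ, true_and] at hq
      obtain ⟨hne, h1, h2⟩ := hq
      have hne' : ¬(q.1 = i ∧ q.2 = j) := by
        rintro ⟨e1, e2⟩
        apply hne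
        rw [← e1, ← e2]
      have hlt : s q.1 < s q.2 := swap_lt_swap hij h1 hne'
      simp only [Finset.mem_coe, Finset.mem_val, hS, Finset.mem_filter, Finset.mem_univ, true_and]
      simp only [Equiv.Perm.mul_apply]
      exact ⟨hlt, by rw [hsc, hsc]; exact h2⟩
    · intro p _; simp [hsc]
    · intro q _; simp [hsc]
  have : T.card = (T.erase (i, j)).card + 1 := by
    rw [Finset.card_erase_of_mem hmemT]
    have : 0 < T.card := Finset.card_pos.mpr ⟨_, hmemT⟩
    omega
  show S.card + 1 = T.card
  omega

lemma invNum_swap_left (u : Equiv.Perm (Fin n)) {i j : Fin n} (hij : (i:ℕ)+1 = j)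
    (hd : u⁻¹ j < u⁻¹ i) : invNum (Equiv.swap i j * u) + 1 = invNum u := by
  have e : (Equiv.swap i j * u)⁻¹ = u⁻¹ * Equiv.swap i j := by
    rw [mul_inv_rev, Equiv.swap_inv]
  have h1 : invNum (Equiv.swap i j * u) = invNum (u⁻¹ * Equiv.swap i j) := by
    rw [← invNum_inv (Equiv.swap i j * u), e]
  rw [h1, invNum_swap_right u⁻¹ hij hd, invNum_inv]

lemma bruhat_swap_right (w : Equiv.Perm (Fin n)) {i j : Fin n} (hij : (i:ℕ)+1 = j)
    (hd : w j < w i) : bruhatLE (w * Equiv.swap i j) w := by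
  set s := Equiv.swap i j with hs
  intro I J
  by_cases hI : (I:ℕ) = (i:ℕ)
  · apply Finset.card_le_card
    intro a ha
    simp only [Finset.mem_coe, Finset.mem_val, Finset.mem_filter, Finset.mem_univ, true_and] at ha ⊢
    simp only [Equiv.Perm.mul_apply] at ha ⊢
    obtain ⟨h1, h2⟩ := ha
    by_cases hai : a = i
    · subst hai
      rw [Equiv.swap_apply_left] at h2
      exact ⟨h1, h2.trans hd.le⟩
    · have haj : a ≠ j := by
        intro he
        have : (a:ℕ) ≤ (I:ℕ) := h1
        rw [he] at this
        omega
      rw [Equiv.swap_apply_of_ne_of_ne hai haj] at h2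
      exact ⟨h1, h2⟩
  · apply Finset.card_le_card_of_injOn (fun a => s a)
    · intro a ha
      simp only [Finset.mem_coe, Finset.mem_val, Finset.mem_filter, Finset.mem_univ, true_and] at ha ⊢
      simp only [Equiv.Perm.mul_apply] at ha ⊢
      obtain ⟨h1, h2⟩ := ha
      refine ⟨?_, h2⟩
      by_cases hai : a = i
      · subst hai
        rw [Equiv.swap_apply_left]
        have : (a:ℕ) ≤ (I:ℕ) := h1
        simp only [Fin.le_def]
        omega
      · by_cases haj : a = j
        · subst haj
          rw [Equiv.swap_apply_right]
          have : (a:ℕ) ≤ (I:ℕ) := h1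
          simp only [Fin.le_def]
          omega
        · rw [Equiv.swap_apply_of_ne_of_ne hai haj]
          exact h1
    · intro x _ y _ hxy
      exact (Equiv.injective s) hxy

lemma bruhat_swap_left (u : Equiv.Perm (Fin n)) {i j : Fin n} (hij : (i:ℕ)+1 = j)
    (hd : u⁻¹ j < u⁻¹ i) : bruhatLE (Equiv.swap i j * u) u := by
  set s := Equiv.swap i j with hs
  intro I J
  by_cases hJ : (J:ℕ) = (j:ℕ)
  · -- injection sending u⁻¹ i ↦ u⁻¹ j
    apply Finset.card_le_card_of_injOn (fun a => if a = u⁻¹ i then u⁻¹ j else a)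
    · intro a ha
      simp only [Finset.mem_coe, Finset.mem_val, Finset.mem_filter, Finset.mem_univ, true_and] at ha ⊢
      simp only [Equiv.Perm.mul_apply] at ha ⊢
      obtain ⟨h1, h2⟩ := ha
      by_cases hai : a = u⁻¹ i
      · simp only [hai, if_pos]
        constructor
        · exact le_trans hd.le (hai ▸ h1)
        · rw [Equiv.Perm.inv_def, Equiv.apply_symm_apply]
          simp only [Fin.le_def]; omega
      · simp only [if_neg hai]
        have hua : u a ≠ i := by
          intro he; apply hai; rw [← he]; simp
        have huaj : u a ≠ j := by
          intro he
          rw [he, Equiv.swap_apply_right] at h2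
          have : (J:ℕ) ≤ (i:ℕ) := h2
          omega
        rw [Equiv.swap_apply_of_ne_of_ne hua huaj] at h2
        exact ⟨h1, h2⟩
    · intro x hx y hy hxy
      simp only [Finset.mem_coe, Finset.mem_filter, Finset.mem_univ, true_and] at hx hy
      simp only [Equiv.Perm.mul_apply] at hx hy
      have hnx : x ≠ u⁻¹ j := by
        intro he
        have := hx.2
        rw [he, Equiv.Perm.inv_def, Equiv.apply_symm_apply, Equiv.swap_apply_right] at this
        have : (J:ℕ) ≤ (i:ℕ) := this
        omega
      have hny : y ≠ u⁻¹ j := by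
        intro he
        have := hy.2
        rw [he, Equiv.Perm.inv_def, Equiv.apply_symm_apply, Equiv.swap_apply_right] at this
        have : (J:ℕ) ≤ (i:ℕ) := this
        omega
      by_cases hxi : x = u⁻¹ i <;> by_cases hyi : y = u⁻¹ i <;>
        simp only [hxi, hyi, if_pos, if_neg, if_true] at hxy <;> simp_all
  · refine le_of_eq ?_
    congr 1
    apply Finset.filter_congr
    intro a _
    have hiff : (J ≤ s (u a)) ↔ (J ≤ u a) := by
      rw [Equiv.swap_apply_def]
      split_ifs <;> simp only [Fin.le_def, Fin.ext_iff, not_and] at * <;> omega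
    simp only [Equiv.Perm.mul_apply]
    rw [hiff]

end Aux

/-- Lemma 6.5: every nonidentity involution `w` of `S_n` admits an involution `w'` strictly
below it in Bruhat order with either `inv w' = inv w - 1` (case (i)) or, via an intermediate
element `s`, `inv w' = inv s - 1 = inv w - 2` (case (ii)); in both cases
`ℓ_θ(w') = ℓ_θ(w) - 1`. -/
theorem involution_descent {n : ℕ} (w : Equiv.Perm (Fin n)) (hw : w * w = 1) (hne : w ≠ 1) :
    (∃ w' : Equiv.Perm (Fin n), w' * w' = 1 ∧ bruhatLT w' w ∧
      invNum w' + 1 = invNum w ∧ thetaLength w' + 1 = thetaLength w) ∨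
    (∃ w' s : Equiv.Perm (Fin n), w' * w' = 1 ∧ bruhatLT w' s ∧ bruhatLT s w ∧
      invNum w' + 1 = invNum s ∧ invNum w' + 2 = invNum w ∧
      thetaLength w' + 1 = thetaLength w) := by
  obtain ⟨i, j, hij, hd⟩ := exists_descent w hne
  have hwinv : ∀ x, w (w x) = x := by
    intro x
    have := congrArg (fun u : Equiv.Perm (Fin n) => u x) hw
    simpa using this
  have hwi : w⁻¹ = w := inv_eq_of_mul_eq_one_right hw
  have hilt : i < j := by rw [Fin.lt_def]; omega
  set s : Equiv.Perm (Fin n) := Equiv.swap i j with hs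
  have hsc : ∀ x, s (s x) = x := fun x => Equiv.swap_apply_self i j x
  have hinv1 := invNum_swap_right w hij hd
  have hb2 := bruhat_swap_right w hij hd
  rw [← hs] at hinv1 hb2
  by_cases hA : w i = j
  · -- Case (i)
    have hA' : w j = i := by
      have := congrArg w hA
      rw [hwinv] at this
      exact this.symm
    left
    have hcomm : ∀ x, s (w x) = w (s x) := by
      intro x
      by_cases hxi : x = i
      · subst hxi
        rw [hA, Equiv.swap_apply_left, Equiv.swap_apply_right, hA']
      · by_cases hxj : x = j
        · subst hxj
          rw [hA', Equiv.swap_apply_right, Equiv.swap_apply_left, hA]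
        · have h1 : w x ≠ i := by
            intro he
            apply hxj
            have := congrArg w he
            rw [hwinv, hA] at this
            exact this
          have h2 : w x ≠ j := by
            intro he
            apply hxi
            have := congrArg w he
            rw [hwinv, hA'] at this
            exact this
          rw [Equiv.swap_apply_of_ne_of_ne h1 h2, Equiv.swap_apply_of_ne_of_ne hxi hxj]
    have hinvo : (w * s) * (w * s) = 1 := by
      ext x
      simp only [Equiv.Perm.mul_apply, Equiv.Perm.one_apply]
      rw [hcomm (s x), hsc, hwinv]
    have hexc : excNum (w * s) + 1 = excNum w := by
      unfold excNum
      have hmem : i ∈ (Finset.univ.filter fun a : Fin n => a < w a) := by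
        simp only [Finset.mem_coe, Finset.mem_val, Finset.mem_filter, Finset.mem_univ, true_and, hA]
        exact hilt
      have hset : (Finset.univ.filter fun a : Fin n => a < (w * s) a)
          = (Finset.univ.filter fun a : Fin n => a < w a).erase i := by
        ext a
        simp only [Finset.mem_coe, Finset.mem_val, Finset.mem_erase, Finset.mem_filter, Finset.mem_univ, true_and]
        simp only [Equiv.Perm.mul_apply]
        by_cases hai : a = i
        · subst hai
          rw [Equiv.swap_apply_left, hA']
          constructor
          · intro h; exact absurd h (lt_irrefl _)
          · rintro ⟨h, -⟩; exact absurd rfl h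
        · by_cases haj : a = j
          · subst haj
            rw [Equiv.swap_apply_right, hA, hA']
            constructor
            · intro h; exact absurd h (lt_irrefl _)
            · rintro ⟨-, h⟩; exact absurd (hilt.trans h) (lt_irrefl _)
          · rw [Equiv.swap_apply_of_ne_of_ne hai haj]
            simp [hai]
      rw [hset, Finset.card_erase_of_mem hmem]
      have : 0 < (Finset.univ.filter fun a : Fin n => a < w a).card :=
        Finset.card_pos.mpr ⟨_, hmem⟩
      omega
    refine ⟨w * s, hinvo, ⟨hb2, ?_⟩, hinv1, ?_⟩
    · intro he
      rw [he] at hinv1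
      omega
    · unfold thetaLength
      omega
  · -- Case (ii)
    right
    have hA' : w j ≠ i := by
      intro he
      apply hA
      have := congrArg w he
      rw [hwinv] at this
      exact this.symm
    have hmidinv : (w * s)⁻¹ = s * w := by
      rw [mul_inv_rev, hwi, hs, Equiv.swap_inv]
    have hd2 : (w * s)⁻¹ j < (w * s)⁻¹ i := by
      rw [hmidinv]
      simp only [Equiv.Perm.mul_apply]
      exact swap_lt_swap hij hd (fun hc => hA' hc.1)
    have hinv2 := invNum_swap_left (w * s) hij hd2
    have hb1 := bruhat_swap_left (w * s) hij hd2
    rw [← hs] at hinv2 hb1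
    have hinvo : (s * (w * s)) * (s * (w * s)) = 1 := by
      ext x
      simp only [Equiv.Perm.mul_apply, Equiv.Perm.one_apply]
      rw [hsc, hwinv, hsc]
    have hexc : excNum (s * (w * s)) = excNum w := by
      unfold excNum
      apply Finset.card_nbij' (fun a => s a) (fun a => s a)
      · intro a ha
        simp only [Finset.mem_coe, Finset.mem_val, Finset.mem_filter, Finset.mem_univ, true_and] at ha ⊢
        simp only [Equiv.Perm.mul_apply] at ha ⊢
        have hside : ¬(a = i ∧ s (w (s a)) = j) := by
          rintro ⟨rfl, hc⟩
          apply hA'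
          have h1 : w (s a) = s j := by rw [← hsc (w (s a)), hc]
          rw [Equiv.swap_apply_left, Equiv.swap_apply_right] at h1
          exact h1
        have := swap_lt_swap hij ha hside
        rw [hsc] at this
        exact this
      · intro a ha
        simp only [Finset.mem_coe, Finset.mem_val, Finset.mem_filter, Finset.mem_univ, true_and] at ha ⊢
        simp only [Equiv.Perm.mul_apply] at ha ⊢
        rw [hsc]
        exact swap_lt_swap hij ha (fun hc => hA (hc.1 ▸ hc.2))
      · intro a _; exact hsc a
      · intro a _; exact hsc a
    refine ⟨s * (w * s), w * s, hinvo, ⟨hb1, ?_⟩, ⟨hb2, ?_⟩, hinv2, ?_, ?_⟩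
    · intro he
      rw [he] at hinv2
      omega
    · intro he
      rw [he] at hinv1
      omega
    · omega
    · unfold thetaLength
      omega
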